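/- arXiv:1609.03737 — 2 statements merged into one kernel-verified Lean document; each statement's English description precedes it below -/
import Mathlib

section
/- For item sizes s_1,...,s_n ≥ 0, demand D ≥ 0, and any set A ⊆ [n] with ∑_{i∈A} s_i < D, every x ∈ {0,1}^n with ∑_i s_i x_i ≥ D satisfies the knapsack cover inequality ∑_{i∉A} min(s_i, U) · x_i ≥ U, where U = D − ∑_{i∈A} s_i. -/
/-- Knapsack cover inequality validity. -/
theorem knapsack_cover_valid (n : ℕ) (s : Fin n → ℝ) (D : ℝ)
    (hs : ∀ i, 0 ≤ s i) (hD : 0 ≤ D)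
    (A : Finset (Fin n)) (hA : ∑ i ∈ A, s i < D)
    (x : Fin n → ℝ) (hx : ∀ i, x i = 0 ∨ x i = 1)
    (hfeas : D ≤ ∑ i, s i * x i) :
    D - ∑ i ∈ A, s i ≤
      ∑ i ∈ Aᶜ, min (s i) (D - ∑ i ∈ A, s i) * x i := by
  set U := D - ∑ i ∈ A, s i with hUdef
  have hU : 0 < U := by simp [hUdef]; linarith
  have hterm : ∀ i, 0 ≤ min (s i) U * x i := by
    intro i
    rcases hx i with h | h <;> simp [h]
    exact ⟨hs i, hU.le⟩
  by_cases hbig : ∃ i ∈ Aᶜ, x i = 1 ∧ U ≤ s i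
  · obtain ⟨i, hi, hxi, hsi⟩ := hbig
    calc U = min (s i) U * x i := by simp [hxi, min_eq_right hsi]
    _ ≤ ∑ j ∈ Aᶜ, min (s j) U * x j :=
        Finset.single_le_sum (fun j _ => hterm j) hi
  · push_neg at hbig
    have heq : ∀ i ∈ Aᶜ, min (s i) U * x i = s i * x i := by
      intro i hi
      rcases hx i with h | h
      · simp [h]
      · have := hbig i hi h
        simp [h, min_eq_left this.le]
    rw [Finset.sum_congr rfl heq]
    have hsplit : ∑ i, s i * x i = ∑ i ∈ A, s i * x i + ∑ i ∈ Aᶜ, s i * x i := by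
      rw [← Finset.sum_add_sum_compl A]
    have hAle : ∑ i ∈ A, s i * x i ≤ ∑ i ∈ A, s i := by
      apply Finset.sum_le_sum
      intro i _
      rcases hx i with h | h <;> simp [h, hs i]
    linarith
end

section
/- Fix an infeasible A and feasible solution (x, y) for single-demand facility location, with B = {i : y_i = 1}, U = D − s(A) > 0, s'_i = min(s_i, U). For any partition F \ A = F₁ ⊔ F₂, the flow cover inequality holds: s'(F₁ ∩ B) + x(F₂ ∩ B) ≥ U, where x(J) = ∑_{i∈J} x_i D. -/
/-- Validity of the flow cover inequalities for single-demand facility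
location. -/
theorem flow_cover_valid (n : ℕ) (s : Fin n → ℝ) (D : ℝ)
    (hs : ∀ i, 0 ≤ s i) (hD : 0 < D)
    (x y : Fin n → ℝ)
    (hy : ∀ i, y i = 0 ∨ y i = 1)
    (hxsum : (∑ i, x i) = 1)
    (hx : ∀ i, 0 ≤ x i * D ∧ x i * D ≤ s i * y i)
    (A F1 F2 : Finset (Fin n))
    (hApart : Disjoint F1 F2) (hcover : F1 ∪ F2 = Aᶜ)
    (hAinf : ∑ i ∈ A, s i < D) :
    D - ∑ i ∈ A, s i ≤
      (∑ i ∈ F1 ∩ Finset.univ.filter (fun i => y i = 1),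
          min (s i) (D - ∑ j ∈ A, s j))
      + (∑ i ∈ F2 ∩ Finset.univ.filter (fun i => y i = 1), x i * D) := by
  set U := D - ∑ i ∈ A, s i with hU
  have hUpos : 0 < U := by simp [hU]; linarith
  set B := Finset.univ.filter (fun i => y i = 1) with hB
  -- terms outside B are zero
  have hxz : ∀ i, i ∉ B → x i * D = 0 := by
    intro i hi
    have hy0 : y i = 0 := by
      rcases hy i with h | h
      · exact h
      · exact absurd (by simp [hB, h]) hi
    have := hx i
    rw [hy0] at this
    nlinarith [this.1, this.2]
  by_cases hcase : ∃ i ∈ F1 ∩ B, U ≤ s i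
  · obtain ⟨i, hi, hiU⟩ := hcase
    have h1 : U ≤ ∑ i ∈ F1 ∩ B, min (s i) U := by
      have := Finset.single_le_sum (f := fun i => min (s i) U)
        (fun j _ => le_min (hs j) hUpos.le) hi
      calc U = min (s i) U := (min_eq_right hiU).symm
        _ ≤ _ := this
    have h2 : 0 ≤ ∑ i ∈ F2 ∩ B, x i * D :=
      Finset.sum_nonneg fun j _ => (hx j).1
    linarith
  · push_neg at hcase
    -- each min term dominates x i * D on F1 ∩ B
    have h1 : ∑ i ∈ F1 ∩ B, x i * D ≤ ∑ i ∈ F1 ∩ B, min (s i) U := by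
      apply Finset.sum_le_sum
      intro i hi
      have hy1 : y i = 1 := by
        have := (Finset.mem_inter.mp hi).2
        simpa [hB] using this
      have hx2 := (hx i).2
      rw [hy1, mul_one] at hx2
      exact le_min hx2 (le_of_lt ((hx2.trans_lt (hcase i hi))))
    have hdisj : Disjoint (F1 ∩ B) (F2 ∩ B) :=
      hApart.mono Finset.inter_subset_left Finset.inter_subset_left
    have hsplit : ∑ i ∈ F1 ∩ B, x i * D + ∑ i ∈ F2 ∩ B, x i * D
        = ∑ i ∈ Aᶜ ∩ B, x i * D := by
      rw [← Finset.sum_union hdisj, ← Finset.union_inter_distrib_right, hcover]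
    have hBsum : ∑ i ∈ Aᶜ ∩ B, x i * D = ∑ i ∈ Aᶜ, x i * D := by
      apply Finset.sum_subset (Finset.inter_subset_left)
      intro i hi hni
      apply hxz
      intro hib
      exact hni (Finset.mem_inter.mpr ⟨hi, hib⟩)
    have htot : ∑ i ∈ A, x i * D + ∑ i ∈ Aᶜ, x i * D = D := by
      rw [Finset.sum_add_sum_compl, ← Finset.sum_mul, hxsum, one_mul]
    have hAle : ∑ i ∈ A, x i * D ≤ ∑ i ∈ A, s i := by
      apply Finset.sum_le_sum
      intro i _
      rcases hy i with h | h
      · have := hx i; rw [h, mul_zero] at this; linarith [hs i, this.1, this.2]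
      · have := (hx i).2; rw [h, mul_one] at this; exact this
    have h2 : U ≤ ∑ i ∈ Aᶜ, x i * D := by simp [hU]; linarith
    linarith [h1, hsplit ▸ (hBsum ▸ h2)]
end
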